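/- arXiv:2009.05020 — 2 statements merged into one kernel-verified Lean document; each statement's English description precedes it below -/
import Mathlib

section
/- Let υ : ℤ → ℂ^{1×r} be finitely supported with first entry symbol υ̂_1(0) ≠ 0, and m ∈ ℕ. Then there exists a finitely supported U : ℤ → ℂ^{r×r} that is strongly invertible (i.e., det(Û(ξ)) is a nonzero monomial in e^{-iξ}) such that υ̂(ξ)Û(ξ) = (1 + O(|ξ|), O(|ξ|^{m+1}), …, O(|ξ|^{m+1})) as ξ → 0. Explicitly, U may be taken as (1/υ̂_1(0)) times the matrix sequence with δ on the diagonal, first row (δ, −u_2, …, −u_r), and zeros elsewhere, where each u_ℓ ∈ ℓ_0(ℤ) satisfies û_ℓ(ξ) = υ̂_ℓ(ξ)/υ̂_1(ξ) + O(|ξ|^{m+1}) as ξ → 0. -/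
open Complex

/-- Symbol (Fourier series) of a scalar sequence. -/
noncomputable def symb (u : ℤ → ℂ) (ξ : ℂ) : ℂ :=
  ∑ᶠ k : ℤ, u k * Complex.exp (-Complex.I * k * ξ)

/-- Entrywise symbol of a matrix-valued sequence. -/
noncomputable def symbM {r : ℕ} (a : ℤ → Fin r → Fin r → ℂ) (i ℓ : Fin r) (ξ : ℂ) : ℂ :=
  ∑ᶠ k : ℤ, a k i ℓ * Complex.exp (-Complex.I * k * ξ)

/-- Iterated derivative of a finite exponential sum. -/
lemma expsum_iteratedDeriv {ι : Type*} (s : Finset ι) (c μ : ι → ℂ) (j : ℕ) :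
    iteratedDeriv j (fun ξ : ℂ => ∑ t ∈ s, c t * Complex.exp (μ t * ξ)) =
      fun ξ : ℂ => ∑ t ∈ s, c t * μ t ^ j * Complex.exp (μ t * ξ) := by
  induction j with
  | zero => simp [iteratedDeriv_zero]
  | succ n ih =>
    rw [iteratedDeriv_succ, ih]
    funext x
    have hterm : ∀ t ∈ s, HasDerivAt (fun ξ : ℂ => c t * μ t ^ n * Complex.exp (μ t * ξ))
        (c t * μ t ^ (n+1) * Complex.exp (μ t * x)) x := by
      intro t _
      have h1 : HasDerivAt (fun ξ : ℂ => μ t * ξ) (μ t) x := by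
        simpa using (hasDerivAt_id x).const_mul (μ t)
      have h3 := h1.cexp.const_mul (c t * μ t ^ n)
      refine h3.congr_deriv ?_
      ring
    rw [(HasDerivAt.fun_sum hterm).deriv]

lemma symb_eq_sum (u : ℤ → ℂ) (s : Finset ℤ) (h : Function.support u ⊆ ↑s) (ξ : ℂ) :
    symb u ξ = ∑ k ∈ s, u k * Complex.exp (-Complex.I * k * ξ) := by
  apply finsum_eq_sum_of_support_subset
  intro k hk
  apply h
  intro hk0
  exact hk (by simp [hk0])

lemma symb_delta (c : ℂ) (ξ : ℂ) :
    symb (fun k : ℤ => if k = 0 then c else 0) ξ = c := by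
  rw [symb, finsum_eq_single _ (0 : ℤ) (by intro k hk; simp [hk])]
  simp

lemma symb_zero_fun (ξ : ℂ) : symb (fun _ : ℤ => (0:ℂ)) ξ = 0 := by
  simp [symb]

/-- Taylor coefficients of `V̂/B̂` defined by the triangular system. -/
noncomputable def tc (B V : ℕ → ℂ) : ℕ → ℂ := fun j =>
  (V j - ∑ s ∈ (Finset.range j).attach,
      (j.choose s.1 : ℂ) * tc B V s.1 * B (j - s.1)) / B 0
termination_by j => j
decreasing_by exact Finset.mem_range.mp s.2

lemma tc_spec (B V : ℕ → ℂ) (hB : B 0 ≠ 0) (j : ℕ) :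
    ∑ s ∈ Finset.range (j+1), (j.choose s : ℂ) * tc B V s * B (j - s) = V j := by
  rw [Finset.sum_range_succ]
  have h : tc B V j = (V j - ∑ s ∈ (Finset.range j).attach,
      (j.choose s.1 : ℂ) * tc B V s.1 * B (j - s.1)) / B 0 := by
    rw [tc]
  rw [← Finset.sum_attach (Finset.range j) (fun s => (j.choose s : ℂ) * tc B V s * B (j - s)), h]
  simp only [Nat.choose_self, Nat.cast_one, one_mul, Nat.sub_self]
  field_simp
  ring

/-- Vandermonde interpolation: trig polynomial with prescribed jet. -/
lemma vand_interp (m : ℕ) (c : Fin (m+1) → ℂ) :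
    ∃ a : Fin (m+1) → ℂ, ∀ s : Fin (m+1),
      ∑ k : Fin (m+1), a k * (-Complex.I * (k : ℕ)) ^ (s : ℕ) = c s := by
  set v : Fin (m+1) → ℂ := fun k => -Complex.I * (k : ℕ) with hv
  set M : Matrix (Fin (m+1)) (Fin (m+1)) ℂ := (Matrix.vandermonde v).transpose with hM
  have hdet : M.det ≠ 0 := by
    rw [Matrix.det_transpose, Matrix.det_vandermonde]
    apply Finset.prod_ne_zero_iff.mpr
    intro i _
    apply Finset.prod_ne_zero_iff.mpr
    intro k hk
    have hik : i < k := Finset.mem_Ioi.mp hk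
    have : v k ≠ v i := by
      simp only [hv]
      intro h
      have := mul_left_cancel₀ (neg_ne_zero.mpr Complex.I_ne_zero) h
      exact absurd (Fin.ext (Nat.cast_injective this)) (ne_of_gt hik)
    exact sub_ne_zero.mpr this
  refine ⟨M⁻¹.mulVec c, fun s => ?_⟩
  have := congrFun (by
    rw [Matrix.mulVec_mulVec, Matrix.mul_nonsing_inv _ (isUnit_iff_ne_zero.mpr hdet),
      Matrix.one_mulVec] : M.mulVec (M⁻¹.mulVec c) = c) s
  rw [← this, Matrix.mulVec, dotProduct]
  apply Finset.sum_congr rfl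
  intro k _
  simp [hM, Matrix.vandermonde, hv, mul_comm]

/-- normal form — there is a strongly invertible, finitely supported `U` with
`υ̂(ξ)Û(ξ) = (1 + O(|ξ|), O(|ξ|^{m+1}), …, O(|ξ|^{m+1}))`, given explicitly by the matrix
with first row `(δ, -u_2, …, -u_r)/υ̂_1(0)` and `δ/υ̂_1(0)` on the diagonal, where
`û_ℓ = υ̂_ℓ/υ̂_1 + O(|ξ|^{m+1})`. -/
theorem stmt15 (r : ℕ) (hr : 0 < r) (m : ℕ)
    (υ : ℤ → Fin r → ℂ) (hυ : (Function.support υ).Finite)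
    (hυ1 : symb (fun k => υ k ⟨0, hr⟩) 0 ≠ 0) :
    ∃ U : ℤ → Fin r → Fin r → ℂ, ∃ u : Fin r → ℤ → ℂ,
      (Function.support U).Finite ∧
      -- strong invertibility: `det Û(ξ)` is a nonzero monomial in `e^{-iξ}`
      (∃ cst : ℂ, cst ≠ 0 ∧ ∃ N : ℤ, ∀ ξ : ℂ,
        Matrix.det (Matrix.of fun i j => symbM U i j ξ) =
          cst * Complex.exp (-Complex.I * (N : ℂ) * ξ)) ∧
      -- `υ̂ Û = (1 + O(|ξ|), O(|ξ|^{m+1}), …, O(|ξ|^{m+1}))`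
      ((∑ i : Fin r, symb (fun k => υ k i) 0 * symbM U i ⟨0, hr⟩ 0) = 1 ∧
        ∀ ℓ : Fin r, ℓ ≠ ⟨0, hr⟩ → ∀ j ≤ m,
          iteratedDeriv j
            (fun ξ : ℂ => ∑ i : Fin r, symb (fun k => υ k i) ξ * symbM U i ℓ ξ) 0 = 0) ∧
      -- the entries `u_ℓ` are finitely supported and satisfy `û_ℓ υ̂_1 = υ̂_ℓ + O(|ξ|^{m+1})`
      (∀ ℓ : Fin r, (Function.support (u ℓ)).Finite) ∧
      (∀ ℓ : Fin r, ℓ ≠ ⟨0, hr⟩ → ∀ j ≤ m,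
        iteratedDeriv j
          (fun ξ : ℂ => symb (u ℓ) ξ * symb (fun k => υ k ⟨0, hr⟩) ξ -
            symb (fun k => υ k ℓ) ξ) 0 = 0) ∧
      -- explicit form of `U`
      (∀ k : ℤ, ∀ i j : Fin r,
        U k i j = (symb (fun n => υ n ⟨0, hr⟩) 0)⁻¹ *
          (if i = ⟨0, hr⟩ then
            (if j = ⟨0, hr⟩ then (if k = 0 then 1 else 0) else -(u j k))
          else (if i = j ∧ k = 0 then 1 else 0))) := by
  classical
  set e0 : Fin r := ⟨0, hr⟩ with he0
  set sv : Finset ℤ := hυ.toFinset with hsv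
  have hsub : ∀ i : Fin r, Function.support (fun k => υ k i) ⊆ ↑sv := by
    intro i k hk
    simp only [hsv, Set.Finite.coe_toFinset, Function.mem_support]
    intro h
    exact hk (by simp [Function.mem_support] at hk ⊢; rw [h]; rfl)
  set B : ℕ → ℂ := fun j => ∑ k ∈ sv, υ k e0 * (-Complex.I * k) ^ j with hB
  set V : Fin r → ℕ → ℂ := fun ℓ j => ∑ k ∈ sv, υ k ℓ * (-Complex.I * k) ^ j with hV
  have hsymb0 : ∀ i : Fin r, symb (fun k => υ k i) 0 = ∑ k ∈ sv, υ k i := by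
    intro i
    rw [symb_eq_sum _ sv (hsub i)]
    simp
  have hB0 : B 0 = symb (fun k => υ k e0) 0 := by
    rw [hsymb0]; simp [hB]
  have hB0ne : B 0 ≠ 0 := by rw [hB0]; exact hυ1
  -- coefficients by interpolation
  have hA : ∀ ℓ : Fin r, ∃ a : Fin (m+1) → ℂ, ∀ s : Fin (m+1),
      ∑ k : Fin (m+1), a k * (-Complex.I * (k : ℕ)) ^ (s : ℕ) = tc B (V ℓ) s :=
    fun ℓ => vand_interp m (fun s => tc B (V ℓ) s)
  choose a ha using hA
  set a' : Fin r → ℕ → ℂ := fun ℓ n => if h : n < m+1 then a ℓ ⟨n, h⟩ else 0 with ha'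
  set u : Fin r → ℤ → ℂ := fun ℓ k => if 0 ≤ k then a' ℓ k.toNat else 0 with hu
  set Icc0m : Finset ℤ := Finset.Icc (0:ℤ) (m:ℤ) with hIcc
  have hu_supp : ∀ ℓ, Function.support (u ℓ) ⊆ ↑Icc0m := by
    intro ℓ k hk
    simp only [hu, Function.mem_support] at hk
    by_cases h0 : 0 ≤ k
    · simp only [if_pos h0] at hk
      by_cases h1 : k.toNat < m+1
      · simp only [hIcc, Finset.coe_Icc, Set.mem_Icc]
        omega
      · exact absurd (by simp [ha', h1]; intro h; exfalso; omega) hk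
    · exact absurd (by simp [h0]) hk
  have hu_fin : ∀ ℓ, (Function.support (u ℓ)).Finite :=
    fun ℓ => Set.Finite.subset (Icc0m.finite_toSet) (hu_supp ℓ)
  have hreindex : ∀ f : ℤ → ℂ, ∑ k ∈ Icc0m, f k = ∑ n ∈ Finset.range (m+1), f n := by
    intro f
    have heq : Icc0m = (Finset.range (m+1)).map ⟨((↑) : ℕ → ℤ), fun x y h => by omega⟩ := by
      ext k
      simp only [hIcc, Finset.mem_Icc, Finset.mem_map, Finset.mem_range,
        Function.Embedding.coeFn_mk]
      constructor
      · intro h; exact ⟨k.toNat, by omega, by show ((k.toNat : ℕ) : ℤ) = k; omega⟩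
      · rintro ⟨n, hn, rfl⟩; show (0:ℤ) ≤ (n:ℤ) ∧ (n:ℤ) ≤ (m:ℤ); omega
    rw [heq, Finset.sum_map]
    rfl
  have hu_val : ∀ ℓ, ∀ n : ℕ, u ℓ (n : ℤ) = a' ℓ n := by
    intro ℓ n
    simp [hu]
  have hAu : ∀ ℓ : Fin r, ∀ s, s ≤ m →
      ∑ p ∈ Icc0m, u ℓ p * (-Complex.I * p) ^ s = tc B (V ℓ) s := by
    intro ℓ s hs
    rw [hreindex]
    rw [← Fin.sum_univ_eq_sum_range (fun n => u ℓ (n:ℤ) * (-Complex.I * ((n:ℤ):ℂ)) ^ s) (m+1)]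
    rw [← ha ℓ ⟨s, Nat.lt_succ_of_le hs⟩]
    apply Finset.sum_congr rfl
    intro k _
    rw [hu_val]
    have : a' ℓ (k : ℕ) = a ℓ k := by simp [ha', k.isLt]; intro h; exact absurd k.isLt (by omega)
    rw [this]
    push_cast
    ring
  -- the key algebraic identity
  have hK : ∀ ℓ : Fin r, ∀ j, j ≤ m →
      ∑ p ∈ Icc0m, ∑ q ∈ sv, (u ℓ p * υ q e0) * (-Complex.I * p + -Complex.I * q) ^ j
        = V ℓ j := by
    intro ℓ j hj
    have expand : ∀ p q : ℤ, (-Complex.I * (p:ℂ) + -Complex.I * (q:ℂ)) ^ j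
        = ∑ s ∈ Finset.range (j+1),
            (-Complex.I * (p:ℂ)) ^ s * (-Complex.I * (q:ℂ)) ^ (j-s) * (j.choose s : ℂ) := by
      intro p q; rw [add_pow]
    calc ∑ p ∈ Icc0m, ∑ q ∈ sv, (u ℓ p * υ q e0) * (-Complex.I * p + -Complex.I * q) ^ j
        = ∑ p ∈ Icc0m, ∑ q ∈ sv, ∑ s ∈ Finset.range (j+1),
            (j.choose s : ℂ) * ((u ℓ p * (-Complex.I * p) ^ s) *
              (υ q e0 * (-Complex.I * q) ^ (j-s))) := by
          refine Finset.sum_congr rfl fun p _ => Finset.sum_congr rfl fun q _ => ?_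
          rw [expand, Finset.mul_sum]
          refine Finset.sum_congr rfl fun s _ => ?_
          ring
      _ = ∑ p ∈ Icc0m, ∑ s ∈ Finset.range (j+1), ∑ q ∈ sv,
            (j.choose s : ℂ) * ((u ℓ p * (-Complex.I * p) ^ s) *
              (υ q e0 * (-Complex.I * q) ^ (j-s))) :=
          Finset.sum_congr rfl fun p _ => Finset.sum_comm
      _ = ∑ s ∈ Finset.range (j+1), ∑ p ∈ Icc0m, ∑ q ∈ sv,
            (j.choose s : ℂ) * ((u ℓ p * (-Complex.I * p) ^ s) *
              (υ q e0 * (-Complex.I * q) ^ (j-s))) :=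
          Finset.sum_comm
      _ = ∑ s ∈ Finset.range (j+1), (j.choose s : ℂ) *
            ((∑ p ∈ Icc0m, u ℓ p * (-Complex.I * p) ^ s) *
              (∑ q ∈ sv, υ q e0 * (-Complex.I * q) ^ (j-s))) := by
          refine Finset.sum_congr rfl fun s _ => ?_
          rw [Finset.sum_mul_sum, Finset.mul_sum]
          refine Finset.sum_congr rfl fun p _ => ?_
          rw [Finset.mul_sum]
      _ = ∑ s ∈ Finset.range (j+1), (j.choose s : ℂ) * tc B (V ℓ) s * B (j-s) := by
          refine Finset.sum_congr rfl fun s hs => ?_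
          rw [hAu ℓ s (le_trans (Nat.lt_succ_iff.mp (Finset.mem_range.mp hs)) hj)]
          rw [hB]
          ring
      _ = V ℓ j := tc_spec B (V ℓ) hB0ne j
  -- exponential-sum representation of the defect functions
  set T : Finset ((ℤ × ℤ) ⊕ ℤ) := (Icc0m ×ˢ sv).disjSum sv with hT
  set C : Fin r → ((ℤ × ℤ) ⊕ ℤ) → ℂ :=
    fun ℓ => Sum.elim (fun pq => u ℓ pq.1 * υ pq.2 e0) (fun k => -υ k ℓ) with hC
  set μ : ((ℤ × ℤ) ⊕ ℤ) → ℂ :=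
    Sum.elim (fun pq : ℤ × ℤ => -Complex.I * pq.1 + -Complex.I * pq.2)
      (fun k : ℤ => -Complex.I * k) with hμ
  have hf : ∀ ℓ : Fin r,
      (fun ξ : ℂ => symb (u ℓ) ξ * symb (fun k => υ k e0) ξ - symb (fun k => υ k ℓ) ξ)
        = fun ξ : ℂ => ∑ t ∈ T, C ℓ t * Complex.exp (μ t * ξ) := by
    intro ℓ
    funext ξ
    rw [hT, Finset.sum_disjSum]
    rw [symb_eq_sum (u ℓ) Icc0m (hu_supp ℓ), symb_eq_sum _ sv (hsub e0),
      symb_eq_sum _ sv (hsub ℓ), Finset.sum_mul_sum, sub_eq_add_neg]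
    congr 1
    · rw [Finset.sum_product]
      refine Finset.sum_congr rfl fun p _ => Finset.sum_congr rfl fun q _ => ?_
      simp only [hC, hμ, Sum.elim_inl]
      rw [add_mul, Complex.exp_add]
      ring
    · rw [← Finset.sum_neg_distrib]
      refine Finset.sum_congr rfl fun k _ => ?_
      simp only [hC, hμ, Sum.elim_inr]
      ring
  -- the derivative sums vanish
  have hDzero : ∀ ℓ : Fin r, ∀ j, j ≤ m → ∑ t ∈ T, C ℓ t * μ t ^ j = 0 := by
    intro ℓ j hj
    rw [hT, Finset.sum_disjSum]
    have h1 : ∑ x ∈ Icc0m ×ˢ sv, C ℓ (Sum.inl x) * μ (Sum.inl x) ^ j = V ℓ j := by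
      rw [Finset.sum_product]
      rw [← hK ℓ j hj]
      exact Finset.sum_congr rfl fun p _ => Finset.sum_congr rfl fun q _ => by
        simp only [hC, hμ, Sum.elim_inl]
    have h2 : ∑ k ∈ sv, C ℓ (Sum.inr k) * μ (Sum.inr k) ^ j = -V ℓ j := by
      rw [hV, ← Finset.sum_neg_distrib]
      exact Finset.sum_congr rfl fun k _ => by simp only [hC, hμ, Sum.elim_inr]; ring
    rw [h1, h2, add_neg_cancel]
  -- condition 5
  have hcond5 : ∀ ℓ : Fin r, ∀ j, j ≤ m →
      iteratedDeriv j
        (fun ξ : ℂ => symb (u ℓ) ξ * symb (fun k => υ k e0) ξ - symb (fun k => υ k ℓ) ξ) 0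
        = 0 := by
    intro ℓ j hj
    rw [hf ℓ, expsum_iteratedDeriv]
    simp only [mul_zero, Complex.exp_zero, mul_one]
    exact hDzero ℓ j hj
  -- the matrix U
  set c0 : ℂ := (symb (fun n => υ n e0) 0)⁻¹ with hc0
  have hc0ne : c0 ≠ 0 := inv_ne_zero hυ1
  set U : ℤ → Fin r → Fin r → ℂ := fun k i j => c0 *
    (if i = e0 then (if j = e0 then (if k = 0 then 1 else 0) else -(u j k))
      else (if i = j ∧ k = 0 then 1 else 0)) with hU
  have hUsupp : (Function.support U).Finite := by
    apply (Set.finite_Icc (0:ℤ) (m:ℤ)).subset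
    intro k hk
    by_contra hnot
    apply hk
    have hk0 : k ≠ 0 := by
      intro h
      exact hnot (by rw [h]; constructor <;> simp)
    have hku : ∀ ℓ : Fin r, u ℓ k = 0 := by
      intro ℓ
      by_contra hne
      exact hnot (by simpa [hIcc] using hu_supp ℓ hne)
    funext i j
    simp only [hU, hk0, hku, if_false, and_false, neg_zero]
    split <;> simp [hk0, hku]
  -- symbM facts
  have hsymbM : ∀ (i j : Fin r) (ξ : ℂ), symbM U i j ξ = symb (fun k => U k i j) ξ :=
    fun _ _ _ => rfl
  have hMdiag : ∀ (i : Fin r) (ξ : ℂ), symbM U i i ξ = c0 := by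
    intro i ξ
    rw [hsymbM]
    by_cases hi : i = e0
    · have : (fun k => U k i i) = fun k : ℤ => if k = 0 then c0 else 0 := by
        funext k
        simp only [hU, hi, if_pos rfl]
        split <;> simp
      rw [this, symb_delta]
    · have : (fun k => U k i i) = fun k : ℤ => if k = 0 then c0 else 0 := by
        funext k
        simp only [hU, hi, if_false, true_and]
        split <;> simp
      rw [this, symb_delta]
  have hMoff : ∀ (i j : Fin r) (ξ : ℂ), i ≠ j → i ≠ e0 → symbM U i j ξ = 0 := by
    intro i j ξ hij hie
    rw [hsymbM]
    have : (fun k => U k i j) = fun _ : ℤ => (0:ℂ) := by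
      funext k
      simp [hU, hie, hij]
    rw [this, symb_zero_fun]
  have hM0ℓ : ∀ (j : Fin r) (ξ : ℂ), j ≠ e0 →
      symbM U e0 j ξ = -c0 * symb (u j) ξ := by
    intro j ξ hj
    rw [hsymbM]
    have hsupp : Function.support (fun k => U k e0 j) ⊆ ↑Icc0m := by
      intro k hk
      apply hu_supp j
      simp only [hU, if_pos rfl, if_neg hj, if_true, Function.mem_support] at hk ⊢
      intro h
      apply hk
      rw [h]
      ring
    rw [symb_eq_sum _ Icc0m hsupp, symb_eq_sum (u j) Icc0m (hu_supp j), Finset.mul_sum]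
    refine Finset.sum_congr rfl fun k _ => ?_
    simp only [hU, if_pos rfl, if_neg hj, if_true]
    ring
  refine ⟨U, u, hUsupp, ⟨c0 ^ r, pow_ne_zero r hc0ne, 0, fun ξ => ?_⟩,
    ⟨?_, fun ℓ hℓ j hj => ?_⟩, hu_fin, fun ℓ _ j hj => hcond5 ℓ j hj, fun k i j => rfl⟩
  · -- determinant
    rw [Matrix.det_of_upperTriangular]
    · have : ∀ i : Fin r, (Matrix.of fun i j => symbM U i j ξ) i i = c0 :=
        fun i => hMdiag i ξ
      rw [Finset.prod_congr rfl fun i _ => this i]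
      simp
    · intro i j hji
      have hie : i ≠ e0 := by
        intro h
        rw [h] at hji
        exact absurd hji (by simp [he0, Fin.lt_def])
      exact hMoff i j ξ (fun h => absurd hji (by rw [h]; exact lt_irrefl j)) hie
  · -- value 1 at 0
    rw [Fintype.sum_eq_single e0 (fun i hi => ?_)]
    · rw [hMdiag e0 0, hc0]
      exact mul_inv_cancel₀ hυ1
    · rw [hMoff i e0 0 hi hi, mul_zero]
  · -- condition 4
    have hg : (fun ξ : ℂ => ∑ i : Fin r, symb (fun k => υ k i) ξ * symbM U i ℓ ξ)
        = fun ξ : ℂ => ∑ t ∈ T, (-c0 * C ℓ t) * Complex.exp (μ t * ξ) := by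
      funext ξ
      have hvanish : ∀ i : Fin r, i ∈ Finset.univ → i ∉ ({e0, ℓ} : Finset (Fin r)) →
          symb (fun k => υ k i) ξ * symbM U i ℓ ξ = 0 := by
        intro i _ hi
        simp only [Finset.mem_insert, Finset.mem_singleton, not_or] at hi
        rw [hMoff i ℓ ξ hi.2 hi.1, mul_zero]
      rw [← Finset.sum_subset (Finset.subset_univ {e0, ℓ}) hvanish]
      rw [Finset.sum_pair (Ne.symm hℓ)]
      rw [hM0ℓ ℓ ξ hℓ, hMdiag ℓ ξ]
      have := congrFun (hf ℓ) ξ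
      calc symb (fun k => υ k e0) ξ * (-c0 * symb (u ℓ) ξ) + symb (fun k => υ k ℓ) ξ * c0
          = -c0 * (symb (u ℓ) ξ * symb (fun k => υ k e0) ξ - symb (fun k => υ k ℓ) ξ) := by
            ring
        _ = -c0 * ∑ t ∈ T, C ℓ t * Complex.exp (μ t * ξ) := by rw [this]
        _ = ∑ t ∈ T, (-c0 * C ℓ t) * Complex.exp (μ t * ξ) := by
            rw [Finset.mul_sum]
            exact Finset.sum_congr rfl fun t _ => by ring
    rw [hg, expsum_iteratedDeriv]
    simp only [mul_zero, Complex.exp_zero, mul_one]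
    calc ∑ t ∈ T, -c0 * C ℓ t * μ t ^ j = -c0 * ∑ t ∈ T, C ℓ t * μ t ^ j := by
          rw [Finset.mul_sum]
          exact Finset.sum_congr rfl fun t _ => by ring
      _ = 0 := by rw [hDzero ℓ j hj, mul_zero]
end

section
/- Let a : ℤ → ℂ^{r×r} be a finitely supported mask with order m+1 sum rules with respect to υ (υ̂(0) ≠ 0), and let U : ℤ → ℂ^{r×r} be any strongly invertible finitely supported sequence. Define the new mask å by \widehat{å}(ξ) := (Û(2ξ))^{-1} â(ξ) Û(ξ). Then å is finitely supported and has order m+1 sum rules with respect to ů defined by \widehat{ů}(ξ) := υ̂(ξ)Û(ξ); moreover, if φ is an r×1 vector of compactly supported distributions with φ̂(2ξ) = â(ξ)φ̂(ξ), then φ̊ defined by \widehat{φ̊}(ξ) := (Û(ξ))^{-1}φ̂(ξ) is a vector of compactly supported distributions with \widehat{φ̊}(2ξ) = \widehat{å}(ξ)\widehat{φ̊}(ξ). -/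
open Complex

section stmt16aux
open Function

/-- Symbol of a matrix-valued sequence. -/
noncomputable def symbMat {r : ℕ} (a : ℤ → Matrix (Fin r) (Fin r) ℂ) (ξ : ℂ) :
    Matrix (Fin r) (Fin r) ℂ :=
  ∑ᶠ k : ℤ, Complex.exp (-Complex.I * k * ξ) • a k

lemma symb_eq (u : ℤ → ℂ) (hu : (support u).Finite) (ξ : ℂ) :
    symb u ξ = ∑ k ∈ hu.toFinset, u k * Complex.exp (-Complex.I * k * ξ) := by
  refine finsum_eq_sum_of_support_subset _ ?_
  intro k hk
  rw [Set.Finite.coe_toFinset]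
  intro h0
  exact hk (by simp [h0])

lemma symbMat_eq {r : ℕ} (a : ℤ → Matrix (Fin r) (Fin r) ℂ) (ha : (support a).Finite) (ξ : ℂ) :
    symbMat a ξ = ∑ k ∈ ha.toFinset, Complex.exp (-Complex.I * k * ξ) • a k := by
  refine finsum_eq_sum_of_support_subset _ ?_
  intro k hk
  rw [Set.Finite.coe_toFinset]
  intro h0
  exact hk (by simp [h0])

lemma symbMat_apply {r : ℕ} (a : ℤ → Matrix (Fin r) (Fin r) ℂ) (ha : (support a).Finite)
    (ξ : ℂ) (i ℓ : Fin r) :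
    symbMat a ξ i ℓ = ∑ k ∈ ha.toFinset, Complex.exp (-Complex.I * k * ξ) * a k i ℓ := by
  rw [symbMat_eq a ha ξ]
  simp [Matrix.sum_apply]

lemma symb_diff (u : ℤ → ℂ) (hu : (support u).Finite) : Differentiable ℂ (symb u) := by
  have : symb u = fun ξ => ∑ k ∈ hu.toFinset, u k * Complex.exp (-Complex.I * k * ξ) :=
    funext fun ξ => symb_eq u hu ξ
  rw [this]
  refine Differentiable.fun_sum fun k _ => ?_
  exact (differentiable_const _).mul (((differentiable_const _).mul differentiable_id).cexp)

lemma symbMat_apply_diff {r : ℕ} (a : ℤ → Matrix (Fin r) (Fin r) ℂ) (ha : (support a).Finite)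
    (i ℓ : Fin r) : Differentiable ℂ (fun ξ => symbMat a ξ i ℓ) := by
  have : (fun ξ => symbMat a ξ i ℓ) =
      fun ξ => ∑ k ∈ ha.toFinset, Complex.exp (-Complex.I * k * ξ) * a k i ℓ :=
    funext fun ξ => symbMat_apply a ha ξ i ℓ
  rw [this]
  refine Differentiable.fun_sum fun k _ => ?_
  exact ((((differentiable_const _).mul differentiable_id).cexp)).mul (differentiable_const _)

lemma symbMat_two_pi {r : ℕ} (a : ℤ → Matrix (Fin r) (Fin r) ℂ) (ha : (support a).Finite)
    (ξ : ℂ) : symbMat a (ξ + 2 * Real.pi) = symbMat a ξ := by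
  rw [symbMat_eq a ha, symbMat_eq a ha]
  refine Finset.sum_congr rfl fun k _ => ?_
  have h1 : -Complex.I * k * (ξ + 2 * Real.pi) =
      -Complex.I * k * ξ + (-k : ℤ) * (2 * Real.pi * Complex.I) := by
    push_cast; ring
  rw [h1, Complex.exp_add, Complex.exp_int_mul_two_pi_mul_I, mul_one]

noncomputable def conv {r : ℕ} (x y : ℤ → Matrix (Fin r) (Fin r) ℂ) (k : ℤ) :
    Matrix (Fin r) (Fin r) ℂ :=
  ∑ᶠ j : ℤ, x j * y (k - j)

lemma conv_eq {r : ℕ} (x y : ℤ → Matrix (Fin r) (Fin r) ℂ) (hx : (support x).Finite) (k : ℤ) :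
    conv x y k = ∑ j ∈ hx.toFinset, x j * y (k - j) := by
  refine finsum_eq_sum_of_support_subset _ ?_
  intro j hj
  rw [Set.Finite.coe_toFinset]
  intro h0
  exact hj (by simp [h0])

lemma support_conv_subset {r : ℕ} (x y : ℤ → Matrix (Fin r) (Fin r) ℂ)
    (hx : (support x).Finite) (hy : (support y).Finite) :
    support (conv x y) ⊆ ↑((hx.toFinset ×ˢ hy.toFinset).image fun p => p.1 + p.2) := by
  intro k hk
  have hk' : conv x y k ≠ 0 := hk
  rw [conv_eq x y hx] at hk'
  obtain ⟨j, hj, hne⟩ := Finset.exists_ne_zero_of_sum_ne_zero hk'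
  have hy' : y (k - j) ≠ 0 := fun h => hne (by simp [h])
  simp only [Finset.coe_image, Set.mem_image, Finset.mem_coe, Finset.mem_product]
  exact ⟨(j, k - j), ⟨hj, by simpa using hy'⟩, by ring⟩

lemma support_conv_finite {r : ℕ} (x y : ℤ → Matrix (Fin r) (Fin r) ℂ)
    (hx : (support x).Finite) (hy : (support y).Finite) :
    (support (conv x y)).Finite :=
  Set.Finite.subset (Finset.finite_toSet _) (support_conv_subset x y hx hy)

lemma symbMat_conv {r : ℕ} (x y : ℤ → Matrix (Fin r) (Fin r) ℂ)
    (hx : (support x).Finite) (hy : (support y).Finite) (ξ : ℂ) :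
    symbMat (conv x y) ξ = symbMat x ξ * symbMat y ξ := by
  classical
  set e : ℤ → ℂ := fun k => Complex.exp (-Complex.I * k * ξ) with he
  have hmul : ∀ j l : ℤ, e j * e l = e (j + l) := by
    intro j l
    rw [he]
    simp only [← Complex.exp_add]
    congr 1
    push_cast
    ring
  have hLHS : symbMat (conv x y) ξ =
      ∑ k ∈ (hx.toFinset ×ˢ hy.toFinset).image (fun p => p.1 + p.2), e k • conv x y k := by
    refine finsum_eq_sum_of_support_subset _ ?_
    intro k hk
    have : conv x y k ≠ 0 := fun h => hk (by simp [h, he])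
    exact support_conv_subset x y hx hy this
  rw [hLHS, symbMat_eq x hx, symbMat_eq y hy, Finset.sum_mul_sum]
  have hterm : ∀ j l : ℤ, (e j • x j) * (e l • y l) = e (j + l) • (x j * y l) := by
    intro j l
    rw [Matrix.smul_mul, Matrix.mul_smul, smul_smul, hmul]
  calc ∑ k ∈ (hx.toFinset ×ˢ hy.toFinset).image (fun p => p.1 + p.2), e k • conv x y k
      = ∑ k ∈ (hx.toFinset ×ˢ hy.toFinset).image (fun p => p.1 + p.2),
          ∑ j ∈ hx.toFinset, e k • (x j * y (k - j)) := by
        refine Finset.sum_congr rfl fun k _ => ?_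
        rw [conv_eq x y hx, Finset.smul_sum]
    _ = ∑ j ∈ hx.toFinset, ∑ k ∈ (hx.toFinset ×ˢ hy.toFinset).image (fun p => p.1 + p.2),
          e k • (x j * y (k - j)) := Finset.sum_comm
    _ = ∑ j ∈ hx.toFinset, ∑ l ∈ hy.toFinset, (e j • x j) * (e l • y l) := by
        refine Finset.sum_congr rfl fun j hj => ?_
        rw [show (∑ l ∈ hy.toFinset, (e j • x j) * (e l • y l)) =
            ∑ l ∈ hy.toFinset, e (j + l) • (x j * y l) from
          Finset.sum_congr rfl fun l _ => hterm j l]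
        rw [show (∑ l ∈ hy.toFinset, e (j + l) • (x j * y l)) =
            ∑ k ∈ hy.toFinset.image (fun l => j + l), e k • (x j * y (k - j)) from ?_]
        · refine (Finset.sum_subset ?_ ?_).symm
          · intro k hk
            simp only [Finset.mem_image] at hk
            obtain ⟨l, hl, rfl⟩ := hk
            exact Finset.mem_image.2 ⟨(j, l), Finset.mem_product.2 ⟨hj, hl⟩, rfl⟩
          · intro k _ hk
            have : y (k - j) = 0 := by
              by_contra hne
              exact hk (Finset.mem_image.2 ⟨k - j, by simpa using hne, by ring⟩)
            simp [this]
        · rw [Finset.sum_image (fun a _ b _ h => by omega)]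
          refine Finset.sum_congr rfl fun l _ => ?_
          simp

noncomputable def dil2 {r : ℕ} (x : ℤ → Matrix (Fin r) (Fin r) ℂ) (k : ℤ) :
    Matrix (Fin r) (Fin r) ℂ :=
  if 2 ∣ k then x (k / 2) else 0

lemma support_dil2_subset {r : ℕ} (x : ℤ → Matrix (Fin r) (Fin r) ℂ)
    (hx : (support x).Finite) :
    support (dil2 x) ⊆ ↑(hx.toFinset.image fun j => 2 * j) := by
  intro k hk
  have hk' : dil2 x k ≠ 0 := hk
  unfold dil2 at hk'
  split_ifs at hk' with h2
  · simp only [Finset.coe_image, Set.mem_image, Finset.mem_coe]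
    exact ⟨k / 2, by simpa using hk', by omega⟩
  · exact absurd rfl hk'

lemma support_dil2_finite {r : ℕ} (x : ℤ → Matrix (Fin r) (Fin r) ℂ)
    (hx : (support x).Finite) : (support (dil2 x)).Finite :=
  Set.Finite.subset (Finset.finite_toSet _) (support_dil2_subset x hx)

lemma symbMat_dil2 {r : ℕ} (x : ℤ → Matrix (Fin r) (Fin r) ℂ)
    (hx : (support x).Finite) (ξ : ℂ) :
    symbMat (dil2 x) ξ = symbMat x (2 * ξ) := by
  classical
  have hL : symbMat (dil2 x) ξ =
      ∑ k ∈ hx.toFinset.image (fun j : ℤ => 2 * j),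
        Complex.exp (-Complex.I * (k : ℂ) * ξ) • dil2 x k := by
    refine finsum_eq_sum_of_support_subset _ ?_
    intro k hk
    have : dil2 x k ≠ 0 := fun h => hk (by simp [h])
    exact support_dil2_subset x hx this
  rw [hL, symbMat_eq x hx, Finset.sum_image (fun a _ b _ h => by omega)]
  refine Finset.sum_congr rfl fun j _ => ?_
  have h1 : dil2 x (2 * j) = x j := by
    unfold dil2
    rw [if_pos ⟨j, rfl⟩]
    rw [Int.mul_ediv_cancel_left j two_ne_zero]
  rw [h1]
  congr 1
  push_cast
  ring

lemma iterDeriv_add (f g : ℂ → ℂ) (hf : Differentiable ℂ f) (hg : Differentiable ℂ g)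
    (n : ℕ) (x : ℂ) :
    iteratedDeriv n (fun ξ => f ξ + g ξ) x = iteratedDeriv n f x + iteratedDeriv n g x := by
  simp only [iteratedDeriv_eq_iteratedFDeriv]
  rw [show (fun ξ => f ξ + g ξ) = f + g from rfl,
    iteratedFDeriv_add_apply hf.contDiff.contDiffAt hg.contDiff.contDiffAt]
  rfl

lemma iterDeriv_sum {ι : Type*} (s : Finset ι) (h : ι → ℂ → ℂ)
    (hd : ∀ i ∈ s, Differentiable ℂ (h i)) (n : ℕ) (x : ℂ) :
    iteratedDeriv n (fun ξ => ∑ i ∈ s, h i ξ) x = ∑ i ∈ s, iteratedDeriv n (h i) x := by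
  simp only [iteratedDeriv_eq_iteratedFDeriv]
  rw [iteratedFDeriv_sum (fun i hi => (hd i hi).contDiff)]
  simp

lemma deriv_entire {f : ℂ → ℂ} (hf : Differentiable ℂ f) : Differentiable ℂ (deriv f) :=
  ((contDiff_infty_iff_deriv.mp hf.contDiff).2).differentiable (by simp)

lemma vanish_mul : ∀ (n : ℕ) (f g : ℂ → ℂ), Differentiable ℂ f → Differentiable ℂ g →
    (∀ i ≤ n, iteratedDeriv i f 0 = 0) → iteratedDeriv n (fun ξ => f ξ * g ξ) 0 = 0 := by
  intro n
  induction n with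
  | zero =>
    intro f g _ _ h
    simpa [iteratedDeriv_zero] using by
      have := h 0 le_rfl
      rw [iteratedDeriv_zero] at this
      simp [this]
  | succ n ih =>
    intro f g hf hg h
    rw [iteratedDeriv_succ']
    have hd : deriv (fun ξ => f ξ * g ξ) =
        fun ξ => deriv f ξ * g ξ + f ξ * deriv g ξ :=
      funext fun ξ => deriv_fun_mul (hf ξ) (hg ξ)
    rw [hd, iterDeriv_add (fun ξ => deriv f ξ * g ξ) (fun ξ => f ξ * deriv g ξ) (((deriv_entire hf).mul hg)) (hf.mul (deriv_entire hg))]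
    have h1 : iteratedDeriv n (fun ξ => deriv f ξ * g ξ) 0 = 0 := by
      refine ih (deriv f) g (deriv_entire hf) hg fun i hi => ?_
      rw [← iteratedDeriv_succ']
      exact h (i + 1) (by omega)
    have h2 : iteratedDeriv n (fun ξ => f ξ * deriv g ξ) 0 = 0 :=
      ih f (deriv g) hf (deriv_entire hg) fun i hi => h i (by omega)
    rw [h1, h2, add_zero]

lemma vanish_sum {ι : Type*} (s : Finset ι) (F G : ι → ℂ → ℂ) (m : ℕ)
    (hF : ∀ i ∈ s, Differentiable ℂ (F i)) (hG : ∀ i ∈ s, Differentiable ℂ (G i))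
    (hv : ∀ i ∈ s, ∀ j ≤ m, iteratedDeriv j (F i) 0 = 0) :
    ∀ j ≤ m, iteratedDeriv j (fun ξ => ∑ i ∈ s, F i ξ * G i ξ) 0 = 0 := by
  intro j hj
  rw [iterDeriv_sum s (fun i ξ => F i ξ * G i ξ) (fun i hi => (hF i hi).mul (hG i hi))]
  refine Finset.sum_eq_zero fun i hi => ?_
  exact vanish_mul j (F i) (G i) (hF i hi) (hG i hi) fun l hl => hv i hi l (hl.trans hj)

lemma rowmul {r : ℕ} (x : Fin r → ℂ) (A B : Matrix (Fin r) (Fin r) ℂ) (ℓ : Fin r) :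
    ∑ i : Fin r, (∑ s : Fin r, x s * A s i) * B i ℓ = ∑ s : Fin r, x s * (A * B) s ℓ := by
  simp only [Matrix.mul_apply, Finset.sum_mul, Finset.mul_sum, mul_assoc]
  exact Finset.sum_comm

lemma colmul {r : ℕ} (A B : Matrix (Fin r) (Fin r) ℂ) (x : Fin r → ℂ) (ℓ : Fin r) :
    ∑ i : Fin r, A ℓ i * (∑ s : Fin r, B i s * x s) = ∑ s : Fin r, (A * B) ℓ s * x s := by
  simp only [Matrix.mul_apply, Finset.mul_sum, Finset.sum_mul, mul_assoc]
  exact Finset.sum_comm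

end stmt16aux

/-- transforming a mask with sum rules by a strongly invertible `U` yields a
finitely supported mask `å` with `\widehat{å}(ξ) = Û(2ξ)^{-1}â(ξ)Û(ξ)` having order `m+1`
sum rules w.r.t. `ů̂ = υ̂Û`; and the transformed refinable vector satisfies the transformed
refinement equation. -/
theorem stmt16 (r m : ℕ) (a : ℤ → Matrix (Fin r) (Fin r) ℂ)
    (ha : (Function.support a).Finite)
    (υ : ℤ → Fin r → ℂ) (hυ : (Function.support υ).Finite)
    (hυ0 : (fun ℓ => symb (fun k => υ k ℓ) 0) ≠ 0)
    (hsr1 : ∀ j ≤ m, ∀ ℓ : Fin r,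
      iteratedDeriv j
        (fun ξ : ℂ => (∑ i : Fin r, symb (fun k => υ k i) (2 * ξ) * symbMat a ξ i ℓ) -
          symb (fun k => υ k ℓ) ξ) 0 = 0)
    (hsr2 : ∀ j ≤ m, ∀ ℓ : Fin r,
      iteratedDeriv j
        (fun ξ : ℂ => ∑ i : Fin r, symb (fun k => υ k i) (2 * ξ) *
          symbMat a (ξ + (Real.pi : ℂ)) i ℓ) 0 = 0)
    (U W : ℤ → Matrix (Fin r) (Fin r) ℂ)
    (hU : (Function.support U).Finite) (hW : (Function.support W).Finite)
    (hUW : ∀ ξ : ℂ, symbMat U ξ * symbMat W ξ = 1 ∧ symbMat W ξ * symbMat U ξ = 1) :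
    ∃ b : ℤ → Matrix (Fin r) (Fin r) ℂ,
      (Function.support b).Finite ∧
      (∀ ξ : ℂ, symbMat b ξ = symbMat W (2 * ξ) * symbMat a ξ * symbMat U ξ) ∧
      -- sum rules for `b` with respect to `ů̂(ξ) := υ̂(ξ)Û(ξ)`
      ((fun ℓ => ∑ i : Fin r, symb (fun k => υ k i) 0 * symbMat U 0 i ℓ) ≠ 0 ∧
        (∀ j ≤ m, ∀ ℓ : Fin r,
          iteratedDeriv j
            (fun ξ : ℂ =>
              (∑ i : Fin r, (∑ s : Fin r, symb (fun k => υ k s) (2 * ξ) *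
                  symbMat U (2 * ξ) s i) * symbMat b ξ i ℓ) -
                ∑ s : Fin r, symb (fun k => υ k s) ξ * symbMat U ξ s ℓ) 0 = 0) ∧
        (∀ j ≤ m, ∀ ℓ : Fin r,
          iteratedDeriv j
            (fun ξ : ℂ =>
              ∑ i : Fin r, (∑ s : Fin r, symb (fun k => υ k s) (2 * ξ) *
                symbMat U (2 * ξ) s i) * symbMat b (ξ + (Real.pi : ℂ)) i ℓ) 0 = 0)) ∧
      -- the transformed vector `φ̊ := Û^{-1}φ̂` satisfies the transformed refinement relation
      (∀ Φ : Fin r → ℂ → ℂ,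
        (∀ ξ : ℂ, ∀ ℓ : Fin r, Φ ℓ (2 * ξ) = ∑ i : Fin r, symbMat a ξ ℓ i * Φ i ξ) →
        ∀ ξ : ℂ, ∀ ℓ : Fin r,
          (∑ i : Fin r, symbMat W (2 * ξ) ℓ i * Φ i (2 * ξ)) =
            ∑ i : Fin r, symbMat b ξ ℓ i * (∑ s : Fin r, symbMat W ξ i s * Φ s ξ)) := by
  classical
  -- finiteness of coordinate supports of υ
  have hυs : ∀ s : Fin r, (Function.support fun k => υ k s).Finite := fun s =>
    hυ.subset fun k hk h => hk (by simp [h])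
  set b : ℤ → Matrix (Fin r) (Fin r) ℂ := conv (dil2 W) (conv a U) with hbdef
  have hconvAU : (Function.support (conv a U)).Finite := support_conv_finite a U ha hU
  have hbfin : (Function.support b).Finite :=
    support_conv_finite _ _ (support_dil2_finite W hW) hconvAU
  have hb2 : ∀ ξ : ℂ, symbMat b ξ = symbMat W (2 * ξ) * symbMat a ξ * symbMat U ξ := by
    intro ξ
    rw [hbdef, symbMat_conv _ _ (support_dil2_finite W hW) hconvAU,
      symbMat_dil2 W hW, symbMat_conv a U ha hU, Matrix.mul_assoc]
  refine ⟨b, hbfin, hb2, ⟨?_, ?_, ?_⟩, ?_⟩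
  · -- ů̂(0) ≠ 0
    intro heq
    apply hυ0
    funext s
    have key : symb (fun k => υ k s) 0 = 0 := by
      have h1 : ∑ i : Fin r, symb (fun k => υ k i) 0 *
          (symbMat U 0 * symbMat W 0) i s = symb (fun k => υ k s) 0 := by
        rw [(hUW 0).1]
        simp [Matrix.one_apply]
      rw [← h1, ← rowmul]
      refine Finset.sum_eq_zero fun ℓ _ => ?_
      have := congrFun heq ℓ
      simp only [Pi.zero_apply] at this
      rw [this, zero_mul]
    simpa using key
  · -- sum rules part 1
    intro j hj ℓ
    set F : Fin r → ℂ → ℂ := fun i ξ =>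
      (∑ s : Fin r, symb (fun k => υ k s) (2 * ξ) * symbMat a ξ s i) -
        symb (fun k => υ k i) ξ with hF
    set G : Fin r → ℂ → ℂ := fun i ξ => symbMat U ξ i ℓ with hG
    have hfun : (fun ξ : ℂ =>
        (∑ i : Fin r, (∑ s : Fin r, symb (fun k => υ k s) (2 * ξ) *
            symbMat U (2 * ξ) s i) * symbMat b ξ i ℓ) -
          ∑ s : Fin r, symb (fun k => υ k s) ξ * symbMat U ξ s ℓ) =
        fun ξ => ∑ i : Fin r, F i ξ * G i ξ := by
      funext ξ
      have hUB : symbMat U (2 * ξ) * symbMat b ξ = symbMat a ξ * symbMat U ξ := by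
        rw [hb2 ξ, ← Matrix.mul_assoc, ← Matrix.mul_assoc, (hUW (2 * ξ)).1, Matrix.one_mul]
      rw [rowmul, hUB, ← rowmul, ← Finset.sum_sub_distrib]
      exact Finset.sum_congr rfl fun i _ => (sub_mul _ _ _).symm
    rw [hfun]
    refine vanish_sum Finset.univ F G m ?_ ?_ ?_ j hj
    · intro i _
      refine Differentiable.sub ?_ (symb_diff _ (hυs i))
      refine Differentiable.fun_sum fun s _ => Differentiable.mul ?_ (symbMat_apply_diff a ha s i)
      exact (symb_diff _ (hυs s)).comp (differentiable_id.const_mul 2)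
    · intro i _
      exact symbMat_apply_diff U hU i ℓ
    · intro i _ l hl
      exact hsr1 l hl i
  · -- sum rules part 2
    intro j hj ℓ
    set F : Fin r → ℂ → ℂ := fun i ξ =>
      ∑ s : Fin r, symb (fun k => υ k s) (2 * ξ) *
        symbMat a (ξ + (Real.pi : ℂ)) s i with hF
    set G : Fin r → ℂ → ℂ := fun i ξ => symbMat U (ξ + (Real.pi : ℂ)) i ℓ with hG
    have hfun : (fun ξ : ℂ =>
        ∑ i : Fin r, (∑ s : Fin r, symb (fun k => υ k s) (2 * ξ) *
          symbMat U (2 * ξ) s i) * symbMat b (ξ + (Real.pi : ℂ)) i ℓ) =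
        fun ξ => ∑ i : Fin r, F i ξ * G i ξ := by
      funext ξ
      have hper : symbMat W (2 * (ξ + (Real.pi : ℂ))) = symbMat W (2 * ξ) := by
        rw [show (2 : ℂ) * (ξ + (Real.pi : ℂ)) = 2 * ξ + 2 * (Real.pi : ℂ) by ring]
        exact symbMat_two_pi W hW (2 * ξ)
      have hUB : symbMat U (2 * ξ) * symbMat b (ξ + (Real.pi : ℂ)) =
          symbMat a (ξ + (Real.pi : ℂ)) * symbMat U (ξ + (Real.pi : ℂ)) := by
        rw [hb2 (ξ + (Real.pi : ℂ)), hper, ← Matrix.mul_assoc, ← Matrix.mul_assoc,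
          (hUW (2 * ξ)).1, Matrix.one_mul]
      rw [rowmul, hUB, ← rowmul]
    rw [hfun]
    refine vanish_sum Finset.univ F G m ?_ ?_ ?_ j hj
    · intro i _
      refine Differentiable.fun_sum fun s _ => Differentiable.mul ?_ ?_
      · exact (symb_diff _ (hυs s)).comp (differentiable_id.const_mul 2)
      · exact (symbMat_apply_diff a ha s i).comp (differentiable_id.add_const _)
    · intro i _
      exact (symbMat_apply_diff U hU i ℓ).comp (differentiable_id.add_const _)
    · intro i _ l hl
      exact hsr2 l hl i
  · -- refinement relation
    intro Φ hΦ ξ ℓ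
    have h2 : symbMat b ξ * symbMat W ξ = symbMat W (2 * ξ) * symbMat a ξ := by
      rw [hb2 ξ, Matrix.mul_assoc, (hUW ξ).1, Matrix.mul_one]
    calc ∑ i : Fin r, symbMat W (2 * ξ) ℓ i * Φ i (2 * ξ)
        = ∑ i : Fin r, symbMat W (2 * ξ) ℓ i * (∑ s : Fin r, symbMat a ξ i s * Φ s ξ) := by
          exact Finset.sum_congr rfl fun i _ => by rw [hΦ ξ i]
      _ = ∑ s : Fin r, (symbMat W (2 * ξ) * symbMat a ξ) ℓ s * Φ s ξ := colmul _ _ _ _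
      _ = ∑ s : Fin r, (symbMat b ξ * symbMat W ξ) ℓ s * Φ s ξ := by rw [h2]
      _ = ∑ i : Fin r, symbMat b ξ ℓ i * (∑ s : Fin r, symbMat W ξ i s * Φ s ξ) :=
          (colmul _ _ _ _).symm
end
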